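/- Consider the 2-state MDP with states {1,2}: state 2 is absorbing with reward 1/2; from state 1, action 'down' moves deterministically to state 2 with reward 1/2, while action 'up' gives reward 1 and moves back to state 1 with probability 1−1/T and to state 2 with probability 1/T (T ≥ 1). Then every stationary policy has gain (1/2)·1; the policy π_down has bias h^{π_down} = 0 so span(h^{π_down}) = 0; the policy π_up has bias h^{π_up}(1) = T/2, h^{π_up}(2) = 0, so span(h^{π_up}) = T/2; and π_up is the Blackwell-optimal policy, so span(h^⋆) = T/2 while inf over gain-optimal π of span(h^π) equals 0. -/

import Mathlib

open Matrix

/-- The span seminorm on ℝ^{Fin 2}. -/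
noncomputable def spanSem (x : Fin 2 → ℝ) : ℝ := (⨆ s, x s) - ⨅ s, x s

/-- Transition matrix of the stationary policy taking action 'up' at state 1 with
probability p (and 'down' with probability 1−p); state 2 (index 1) is absorbing.
'up' returns to state 1 with probability 1−1/T and moves to state 2 with
probability 1/T; 'down' moves to state 2. -/
noncomputable def Ppol (T p : ℝ) : Matrix (Fin 2) (Fin 2) ℝ :=
  !![p * (1 - 1 / T), p * (1 / T) + (1 - p); 0, 1]

/-- Reward vector of the mixed policy: 'up' gives reward 1, 'down' gives 1/2,
and state 2 gives reward 1/2. -/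
noncomputable def rpol (p : ℝ) : Fin 2 → ℝ := ![p * 1 + (1 - p) * (1 / 2), 1 / 2]

/-- The Cesaro limiting matrix: all mass ends in the absorbing state 2. -/
def PinfEx : Matrix (Fin 2) (Fin 2) ℝ := !![0, 1; 0, 1]

lemma sup_fin2 (x : Fin 2 → ℝ) : (⨆ s, x s) = max (x 0) (x 1) := by
  apply le_antisymm
  · apply ciSup_le; intro s; fin_cases s
    · exact le_max_left _ _
    · exact le_max_right _ _
  · exact max_le (le_ciSup (Set.finite_range x).bddAbove _)
      (le_ciSup (Set.finite_range x).bddAbove _)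

lemma inf_fin2 (x : Fin 2 → ℝ) : (⨅ s, x s) = min (x 0) (x 1) := by
  apply le_antisymm
  · exact le_min (ciInf_le (Set.finite_range x).bddBelow _)
      (ciInf_le (Set.finite_range x).bddBelow _)
  · apply le_ciInf; intro s; fin_cases s
    · exact min_le_left _ _
    · exact min_le_right _ _

lemma spanSem_eq (x : Fin 2 → ℝ) : spanSem x = max (x 0) (x 1) - min (x 0) (x 1) := by
  rw [spanSem, sup_fin2, inf_fin2]

lemma inv_vec {M : Matrix (Fin 2) (Fin 2) ℝ} {w r : Fin 2 → ℝ} (hdet : M.det ≠ 0)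
    (h : M *ᵥ w = r) : M⁻¹ *ᵥ r = w := by
  rw [← h, Matrix.mulVec_mulVec, Matrix.nonsing_inv_mul M (isUnit_iff_ne_zero.mpr hdet),
    Matrix.one_mulVec]

lemma row0_id (u γ q : ℝ) (h1 : (1 - γ) ≠ 0) (h2 : (1 - γ * (q * (1 - u))) ≠ 0) :
    (1 - γ * (q * (1 - u))) *
      (((1 + q) * (1 - γ) + γ * (1 - q * (1 - u))) / (2 * (1 - γ) * (1 - γ * (q * (1 - u)))))
    + (-(γ * (q * u + (1 - q)))) * (1 / (2 * (1 - γ))) = q * 1 + (1 - q) * (1/2) := by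
  generalize (1 - γ * (q * (1 - u))) = D at h2 ⊢
  field_simp
  ring

/-- Solving the gain/bias equations for the mixed policy. -/
lemma solve_eqs (T p : ℝ) (hT : 1 ≤ T) (hp : p ∈ Set.Icc (0:ℝ) 1) (ρ h : Fin 2 → ℝ)
    (h1 : Ppol T p *ᵥ ρ = ρ) (h2 : ρ + h = rpol p + Ppol T p *ᵥ h) (h3 : PinfEx *ᵥ h = 0) :
    ρ = (fun _ => (1/2 : ℝ)) ∧ h 1 = 0 ∧ h 0 * (1 - p * (1 - 1/T)) = p / 2 := by
  have hT0 : (0:ℝ) < T := lt_of_lt_of_le one_pos hT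
  have hTinv : (0:ℝ) < 1/T := by positivity
  have hTle : 1/T ≤ 1 := by rw [div_le_one hT0]; exact hT
  have hpc : p * (1 - 1/T) < 1 := by nlinarith [hp.1, hp.2]
  have eh1 : h 1 = 0 := by
    have e := congrFun h3 0
    simpa [PinfEx, Matrix.mulVec, dotProduct, Fin.sum_univ_two] using e
  have eρ1 : ρ 1 = 1/2 := by
    have e := congrFun h2 1
    simp [Ppol, rpol, Matrix.mulVec, dotProduct, Fin.sum_univ_two, Pi.add_apply] at e
    linarith
  have eρ0 : ρ 0 = 1/2 := by
    have e := congrFun h1 0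
    simp [Ppol, Matrix.mulVec, dotProduct, Fin.sum_univ_two, eρ1] at e
    have key : (ρ 0 - 1/2) * (1 - p * (1 - 1/T)) = 0 := by linear_combination -e
    rcases mul_eq_zero.mp key with hk | hk
    · linarith
    · linarith
  refine ⟨funext fun s => by fin_cases s <;> simpa [eρ0, eρ1], eh1, ?_⟩
  have e := congrFun h2 0
  simp [Ppol, rpol, Matrix.mulVec, dotProduct, Fin.sum_univ_two, Pi.add_apply,
    eρ0, eh1] at e
  linear_combination e

/-- In the 2-state MDP of Figure 1: every stationary policy has gain (1/2)·1;
π_down has bias 0 (span 0); π_up has bias (T/2, 0) (span T/2); π_up is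
Blackwell-optimal (so span(h⋆) = T/2); and the infimum of bias spans over
gain-optimal policies equals 0.  Gain and bias are characterized by
P_π ρ = ρ, ρ + h = r_π + P_π h and P_π^∞ h = 0. -/
theorem stmt18 (T : ℝ) (hT : 1 ≤ T) :
    -- every stationary policy has gain (1/2)·1
    (∀ p ∈ Set.Icc (0 : ℝ) 1, ∀ ρ h : Fin 2 → ℝ,
      Ppol T p *ᵥ ρ = ρ → ρ + h = rpol p + Ppol T p *ᵥ h → PinfEx *ᵥ h = 0 →
      ρ = fun _ => (1 / 2 : ℝ)) ∧
    -- the bias of π_down (p = 0) vanishes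
    (∀ ρ h : Fin 2 → ℝ,
      Ppol T 0 *ᵥ ρ = ρ → ρ + h = rpol 0 + Ppol T 0 *ᵥ h → PinfEx *ᵥ h = 0 →
      h = 0 ∧ spanSem h = 0) ∧
    -- the bias of π_up (p = 1) is (T/2, 0)
    (∀ ρ h : Fin 2 → ℝ,
      Ppol T 1 *ᵥ ρ = ρ → ρ + h = rpol 1 + Ppol T 1 *ᵥ h → PinfEx *ᵥ h = 0 →
      h = ![T / 2, 0] ∧ spanSem h = T / 2) ∧
    -- π_up is Blackwell-optimal
    (∃ γ0 ∈ Set.Ico (0 : ℝ) 1, ∀ γ ∈ Set.Ico γ0 1, ∀ p ∈ Set.Icc (0 : ℝ) 1,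
      ((1 : Matrix (Fin 2) (Fin 2) ℝ) - γ • Ppol T p)⁻¹ *ᵥ rpol p ≤
        ((1 : Matrix (Fin 2) (Fin 2) ℝ) - γ • Ppol T 1)⁻¹ *ᵥ rpol 1) ∧
    -- inf over gain-optimal policies of the bias span equals 0
    IsLeast {v : ℝ | ∃ p ∈ Set.Icc (0 : ℝ) 1, ∃ ρ h : Fin 2 → ℝ,
      Ppol T p *ᵥ ρ = ρ ∧ ρ + h = rpol p + Ppol T p *ᵥ h ∧ PinfEx *ᵥ h = 0 ∧
      ρ = (fun _ => (1 / 2 : ℝ)) ∧ v = spanSem h} 0 := by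
  have hT0 : (0:ℝ) < T := lt_of_lt_of_le one_pos hT
  have hTinv : (0:ℝ) < 1/T := by positivity
  have hTle : 1/T ≤ 1 := by rw [div_le_one hT0]; exact hT
  refine ⟨?_, ?_, ?_, ?_, ?_⟩
  · intro p hp ρ h h1 h2 h3
    exact (solve_eqs T p hT hp ρ h h1 h2 h3).1
  · intro ρ h h1 h2 h3
    obtain ⟨-, eh1, eh0⟩ := solve_eqs T 0 hT ⟨le_refl 0, zero_le_one⟩ ρ h h1 h2 h3
    have eh0' : h 0 = 0 := by nlinarith
    have hz : h = 0 := funext fun s => by fin_cases s <;> simpa [eh0', eh1]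
    refine ⟨hz, ?_⟩
    rw [spanSem_eq, hz]; simp
  · intro ρ h h1 h2 h3
    obtain ⟨-, eh1, eh0⟩ := solve_eqs T 1 hT ⟨zero_le_one, le_refl 1⟩ ρ h h1 h2 h3
    have eh0' : h 0 = T / 2 := by
      have hTne : T ≠ 0 := ne_of_gt hT0
      field_simp at eh0
      linarith
    have hz : h = ![T / 2, 0] := funext fun s => by fin_cases s <;> simp [eh0', eh1]
    refine ⟨hz, ?_⟩
    rw [spanSem_eq, hz]
    have : (0:ℝ) ≤ T / 2 := by linarith
    simp [max_eq_left this, min_eq_right this]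
  · refine ⟨0, ⟨le_refl 0, one_pos⟩, ?_⟩
    intro γ hγ p hp
    have hγ0 : (0:ℝ) ≤ γ := hγ.1
    have hγ1 : γ < 1 := hγ.2
    have hp0 := hp.1
    have hp1 := hp.2
    have hc0 : (0:ℝ) ≤ 1 - 1/T := by linarith
    have hc1 : 1 - 1/T < 1 := by linarith
    -- denominators
    have hd1 : (0:ℝ) < 1 - γ := by linarith
    have dpos : ∀ q : ℝ, q ∈ Set.Icc (0:ℝ) 1 → 0 < 1 - γ * (q * (1 - 1/T)) := by
      intro q hq
      have hx0 : 0 ≤ q * (1 - 1/T) := mul_nonneg hq.1 hc0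
      have hx1 : q * (1 - 1/T) ≤ 1 - 1/T := mul_le_of_le_one_left hc0 hq.2
      have hx2 : γ * (q * (1 - 1/T)) ≤ q * (1 - 1/T) := mul_le_of_le_one_left hx0 hγ1.le
      linarith
    -- explicit matrix form of 1 - γ • Ppol T q
    have hM : ∀ q : ℝ, (1 : Matrix (Fin 2) (Fin 2) ℝ) - γ • Ppol T q =
        !![1 - γ * (q * (1 - 1/T)), -(γ * (q * (1/T) + (1 - q))); 0, 1 - γ] := by
      intro q
      ext i j
      fin_cases i <;> fin_cases j <;> simp [Ppol, Matrix.one_apply] <;> ring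
    -- value vector
    set w : ℝ → Fin 2 → ℝ := fun q =>
      ![((1 + q) * (1 - γ) + γ * (1 - q * (1 - 1/T))) / (2 * (1 - γ) * (1 - γ * (q * (1 - 1/T)))),
        1 / (2 * (1 - γ))] with hw
    have key : ∀ q : ℝ, q ∈ Set.Icc (0:ℝ) 1 →
        ((1 : Matrix (Fin 2) (Fin 2) ℝ) - γ • Ppol T q)⁻¹ *ᵥ rpol q = w q := by
      intro q hq
      have hdq := dpos q hq
      rw [hM q]
      apply inv_vec
      · rw [Matrix.det_fin_two_of]
        have : (1 - γ * (q * (1 - 1/T))) * (1 - γ) > 0 := mul_pos hdq hd1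
        simp only [mul_zero, sub_zero]
        nlinarith
      · funext i
        fin_cases i
        · simpa [hw, rpol, Matrix.mulVec, dotProduct, Fin.sum_univ_two] using
            row0_id (1/T) γ q hd1.ne' hdq.ne'
        · simp [hw, rpol, Matrix.mulVec, dotProduct, Fin.sum_univ_two]
          field_simp
    rw [key p hp, key 1 ⟨zero_le_one, le_refl 1⟩]
    intro s
    fin_cases s
    · show _ / _ ≤ _ / _
      have h2 := dpos 1 ⟨zero_le_one, le_refl 1⟩
      have h3 := dpos p hp
      rw [div_le_div_iff₀ (mul_pos (mul_pos (by norm_num : (0:ℝ) < 2) hd1) h3)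
        (mul_pos (mul_pos (by norm_num : (0:ℝ) < 2) hd1) h2)]
      nlinarith [mul_nonneg (sub_nonneg.2 hp1) (sq_nonneg (1 - γ)), sq_nonneg (1-γ)]
    · exact le_rfl
  · constructor
    · refine ⟨0, ⟨le_refl 0, zero_le_one⟩, (fun _ => (1/2:ℝ)), 0, ?_, ?_, ?_, rfl, ?_⟩
      · funext i
        fin_cases i <;> simp [Ppol, Matrix.mulVec, dotProduct, Fin.sum_univ_two]
      · funext i
        fin_cases i <;>
          simp [Ppol, rpol, Matrix.mulVec, dotProduct, Fin.sum_univ_two, Pi.add_apply] <;>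
          norm_num
      · simp [Matrix.mulVec_zero]
      · rw [spanSem_eq]; simp
    · rintro v ⟨p, hp, ρ, h, -, -, -, -, hv⟩
      rw [hv, spanSem_eq]
      have := min_le_max (a := h 0) (b := h 1)
      linarith
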